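/- The group presented by generators a1, a2, a3, a4, a5, a6 with relations: a_i^2 = e for all i; the braid relations a_i a_j a_i = a_j a_i a_j for the pairs (i,j) ∈ {(1,2),(1,4),(1,5),(1,6),(2,3),(2,4),(2,6),(3,4),(3,5),(3,6),(4,5),(5,6)}; the commutation relations [a1,a3] = [a2,a5] = [a4,a6] = e; and the relations a4 = a1 a2 a1, a5 = a3 a4 a3, a6 = a2 a3 a2, a6 = a1 a5 a1, is isomorphic to the symmetric group S4 via the map a1 ↦ (1 3), a2 ↦ (1 2), a3 ↦ (2 4), a4 ↦ (2 3), a5 ↦ (3 4), a6 ↦ (1 4). -/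

import Mathlib

open FreeGroup
open scoped commutatorElement

/-- The relations of the group `G̃` arising from the tetrahedron `T_{(4)}`
(generators `a1,…,a6` are indexed by `Fin 6`, 0-based). -/
def tetraRels : Set (FreeGroup (Fin 6)) :=
  { of (0:Fin 6) ^ 2, of (1:Fin 6) ^ 2, of (2:Fin 6) ^ 2,
    of (3:Fin 6) ^ 2, of (4:Fin 6) ^ 2, of (5:Fin 6) ^ 2,
    -- braid relations a_i a_j a_i = a_j a_i a_j
    of (0:Fin 6) * of 1 * of 0 * (of 1 * of 0 * of 1)⁻¹,
    of (0:Fin 6) * of 3 * of 0 * (of 3 * of 0 * of 3)⁻¹,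
    of (0:Fin 6) * of 4 * of 0 * (of 4 * of 0 * of 4)⁻¹,
    of (0:Fin 6) * of 5 * of 0 * (of 5 * of 0 * of 5)⁻¹,
    of (1:Fin 6) * of 2 * of 1 * (of 2 * of 1 * of 2)⁻¹,
    of (1:Fin 6) * of 3 * of 1 * (of 3 * of 1 * of 3)⁻¹,
    of (1:Fin 6) * of 5 * of 1 * (of 5 * of 1 * of 5)⁻¹,
    of (2:Fin 6) * of 3 * of 2 * (of 3 * of 2 * of 3)⁻¹,
    of (2:Fin 6) * of 4 * of 2 * (of 4 * of 2 * of 4)⁻¹,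
    of (2:Fin 6) * of 5 * of 2 * (of 5 * of 2 * of 5)⁻¹,
    of (3:Fin 6) * of 4 * of 3 * (of 4 * of 3 * of 4)⁻¹,
    of (4:Fin 6) * of 5 * of 4 * (of 5 * of 4 * of 5)⁻¹,
    -- commutation relations [a1,a3] = [a2,a5] = [a4,a6] = e
    ⁅of (0:Fin 6), of 2⁆, ⁅of (1:Fin 6), of 4⁆, ⁅of (3:Fin 6), of 5⁆,
    -- a4 = a1 a2 a1, a5 = a3 a4 a3, a6 = a2 a3 a2, a6 = a1 a5 a1
    of (3:Fin 6) * (of 0 * of 1 * of 0)⁻¹,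
    of (4:Fin 6) * (of 2 * of 3 * of 2)⁻¹,
    of (5:Fin 6) * (of 1 * of 2 * of 1)⁻¹,
    of (5:Fin 6) * (of 0 * of 4 * of 0)⁻¹ }

namespace TetraAux

abbrev Pg := PresentedGroup tetraRels

/-- The target values of the generators. -/
def Fv : Fin 6 → Equiv.Perm (Fin 4) :=
  ![Equiv.swap 0 2, Equiv.swap 0 1, Equiv.swap 1 3,
    Equiv.swap 1 2, Equiv.swap 2 3, Equiv.swap 0 3]

lemma Fv_rels : ∀ r ∈ tetraRels, FreeGroup.lift Fv r = 1 := by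
  intro r hr
  simp only [tetraRels, Set.mem_insert_iff, Set.mem_singleton_iff] at hr
  rcases hr with rfl|rfl|rfl|rfl|rfl|rfl|rfl|rfl|rfl|rfl|rfl|rfl|rfl|rfl|rfl|rfl|rfl|rfl|rfl|rfl|rfl|rfl|rfl|rfl|rfl <;>
    · simp only [_root_.map_mul, _root_.map_pow, _root_.map_inv, commutatorElement_def, FreeGroup.lift_apply_of]
      decide

def φhom : Pg →* Equiv.Perm (Fin 4) := PresentedGroup.toGroup Fv_rels

lemma relP {r : FreeGroup (Fin 6)} (h : r ∈ tetraRels) :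
    PresentedGroup.mk tetraRels r = 1 :=
  (QuotientGroup.eq_one_iff r).2 (Subgroup.subset_normalClosure h)

lemma mem0 : (of (0:Fin 6) ^ 2) ∈ tetraRels :=
  Set.mem_insert _ _

lemma mem1 : (of (1:Fin 6) ^ 2) ∈ tetraRels :=
  Set.mem_insert_of_mem _ (Set.mem_insert _ _)

lemma mem2 : (of (2:Fin 6) ^ 2) ∈ tetraRels :=
  Set.mem_insert_of_mem _ (Set.mem_insert_of_mem _ (Set.mem_insert _ _))

lemma mem3 : (of (3:Fin 6) ^ 2) ∈ tetraRels :=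
  Set.mem_insert_of_mem _ (Set.mem_insert_of_mem _ (Set.mem_insert_of_mem _ (Set.mem_insert _ _)))

lemma mem4 : (of (4:Fin 6) ^ 2) ∈ tetraRels :=
  Set.mem_insert_of_mem _ (Set.mem_insert_of_mem _ (Set.mem_insert_of_mem _ (Set.mem_insert_of_mem _ (Set.mem_insert _ _))))

lemma mem5 : (of (5:Fin 6) ^ 2) ∈ tetraRels :=
  Set.mem_insert_of_mem _ (Set.mem_insert_of_mem _ (Set.mem_insert_of_mem _ (Set.mem_insert_of_mem _ (Set.mem_insert_of_mem _ (Set.mem_insert _ _)))))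

lemma mem6 : (of (0:Fin 6) * of 1 * of 0 * (of 1 * of 0 * of 1)⁻¹) ∈ tetraRels :=
  Set.mem_insert_of_mem _ (Set.mem_insert_of_mem _ (Set.mem_insert_of_mem _ (Set.mem_insert_of_mem _ (Set.mem_insert_of_mem _ (Set.mem_insert_of_mem _ (Set.mem_insert _ _))))))

lemma mem11 : (of (1:Fin 6) * of 3 * of 1 * (of 3 * of 1 * of 3)⁻¹) ∈ tetraRels :=
  Set.mem_insert_of_mem _ (Set.mem_insert_of_mem _ (Set.mem_insert_of_mem _ (Set.mem_insert_of_mem _ (Set.mem_insert_of_mem _ (Set.mem_insert_of_mem _ (Set.mem_insert_of_mem _ (Set.mem_insert_of_mem _ (Set.mem_insert_of_mem _ (Set.mem_insert_of_mem _ (Set.mem_insert_of_mem _ (Set.mem_insert _ _)))))))))))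

lemma mem13 : (of (2:Fin 6) * of 3 * of 2 * (of 3 * of 2 * of 3)⁻¹) ∈ tetraRels :=
  Set.mem_insert_of_mem _ (Set.mem_insert_of_mem _ (Set.mem_insert_of_mem _ (Set.mem_insert_of_mem _ (Set.mem_insert_of_mem _ (Set.mem_insert_of_mem _ (Set.mem_insert_of_mem _ (Set.mem_insert_of_mem _ (Set.mem_insert_of_mem _ (Set.mem_insert_of_mem _ (Set.mem_insert_of_mem _ (Set.mem_insert_of_mem _ (Set.mem_insert_of_mem _ (Set.mem_insert _ _)))))))))))))

lemma mem16 : (of (3:Fin 6) * of 4 * of 3 * (of 4 * of 3 * of 4)⁻¹) ∈ tetraRels :=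
  Set.mem_insert_of_mem _ (Set.mem_insert_of_mem _ (Set.mem_insert_of_mem _ (Set.mem_insert_of_mem _ (Set.mem_insert_of_mem _ (Set.mem_insert_of_mem _ (Set.mem_insert_of_mem _ (Set.mem_insert_of_mem _ (Set.mem_insert_of_mem _ (Set.mem_insert_of_mem _ (Set.mem_insert_of_mem _ (Set.mem_insert_of_mem _ (Set.mem_insert_of_mem _ (Set.mem_insert_of_mem _ (Set.mem_insert_of_mem _ (Set.mem_insert_of_mem _ (Set.mem_insert _ _))))))))))))))))

lemma mem19 : (⁅of (1:Fin 6), of 4⁆) ∈ tetraRels :=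
  Set.mem_insert_of_mem _ (Set.mem_insert_of_mem _ (Set.mem_insert_of_mem _ (Set.mem_insert_of_mem _ (Set.mem_insert_of_mem _ (Set.mem_insert_of_mem _ (Set.mem_insert_of_mem _ (Set.mem_insert_of_mem _ (Set.mem_insert_of_mem _ (Set.mem_insert_of_mem _ (Set.mem_insert_of_mem _ (Set.mem_insert_of_mem _ (Set.mem_insert_of_mem _ (Set.mem_insert_of_mem _ (Set.mem_insert_of_mem _ (Set.mem_insert_of_mem _ (Set.mem_insert_of_mem _ (Set.mem_insert_of_mem _ (Set.mem_insert_of_mem _ (Set.mem_insert _ _)))))))))))))))))))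

lemma mem21 : (of (3:Fin 6) * (of 0 * of 1 * of 0)⁻¹) ∈ tetraRels :=
  Set.mem_insert_of_mem _ (Set.mem_insert_of_mem _ (Set.mem_insert_of_mem _ (Set.mem_insert_of_mem _ (Set.mem_insert_of_mem _ (Set.mem_insert_of_mem _ (Set.mem_insert_of_mem _ (Set.mem_insert_of_mem _ (Set.mem_insert_of_mem _ (Set.mem_insert_of_mem _ (Set.mem_insert_of_mem _ (Set.mem_insert_of_mem _ (Set.mem_insert_of_mem _ (Set.mem_insert_of_mem _ (Set.mem_insert_of_mem _ (Set.mem_insert_of_mem _ (Set.mem_insert_of_mem _ (Set.mem_insert_of_mem _ (Set.mem_insert_of_mem _ (Set.mem_insert_of_mem _ (Set.mem_insert_of_mem _ (Set.mem_insert _ _)))))))))))))))))))))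

lemma mem22 : (of (4:Fin 6) * (of 2 * of 3 * of 2)⁻¹) ∈ tetraRels :=
  Set.mem_insert_of_mem _ (Set.mem_insert_of_mem _ (Set.mem_insert_of_mem _ (Set.mem_insert_of_mem _ (Set.mem_insert_of_mem _ (Set.mem_insert_of_mem _ (Set.mem_insert_of_mem _ (Set.mem_insert_of_mem _ (Set.mem_insert_of_mem _ (Set.mem_insert_of_mem _ (Set.mem_insert_of_mem _ (Set.mem_insert_of_mem _ (Set.mem_insert_of_mem _ (Set.mem_insert_of_mem _ (Set.mem_insert_of_mem _ (Set.mem_insert_of_mem _ (Set.mem_insert_of_mem _ (Set.mem_insert_of_mem _ (Set.mem_insert_of_mem _ (Set.mem_insert_of_mem _ (Set.mem_insert_of_mem _ (Set.mem_insert_of_mem _ (Set.mem_insert _ _))))))))))))))))))))))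

lemma mem23 : (of (5:Fin 6) * (of 1 * of 2 * of 1)⁻¹) ∈ tetraRels :=
  Set.mem_insert_of_mem _ (Set.mem_insert_of_mem _ (Set.mem_insert_of_mem _ (Set.mem_insert_of_mem _ (Set.mem_insert_of_mem _ (Set.mem_insert_of_mem _ (Set.mem_insert_of_mem _ (Set.mem_insert_of_mem _ (Set.mem_insert_of_mem _ (Set.mem_insert_of_mem _ (Set.mem_insert_of_mem _ (Set.mem_insert_of_mem _ (Set.mem_insert_of_mem _ (Set.mem_insert_of_mem _ (Set.mem_insert_of_mem _ (Set.mem_insert_of_mem _ (Set.mem_insert_of_mem _ (Set.mem_insert_of_mem _ (Set.mem_insert_of_mem _ (Set.mem_insert_of_mem _ (Set.mem_insert_of_mem _ (Set.mem_insert_of_mem _ (Set.mem_insert_of_mem _ (Set.mem_insert _ _)))))))))))))))))))))))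

-- squares
lemma sq (i : Fin 6) : (PresentedGroup.of i : Pg) * PresentedGroup.of i = 1 := by
  fin_cases i
  · have h := relP (mem0); rw [_root_.map_pow, pow_two] at h; exact h
  · have h := relP (mem1); rw [_root_.map_pow, pow_two] at h; exact h
  · have h := relP (mem2); rw [_root_.map_pow, pow_two] at h; exact h
  · have h := relP (mem3); rw [_root_.map_pow, pow_two] at h; exact h
  · have h := relP (mem4); rw [_root_.map_pow, pow_two] at h; exact h
  · have h := relP (mem5); rw [_root_.map_pow, pow_two] at h; exact h

def a : Pg := PresentedGroup.of 0
def b : Pg := PresentedGroup.of 1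
def c : Pg := PresentedGroup.of 2
def d : Pg := PresentedGroup.of 3
def e : Pg := PresentedGroup.of 4
def f : Pg := PresentedGroup.of 5

lemma rb : b * b = 1 := sq 1
lemma rd : d * d = 1 := sq 3
lemma re : e * e = 1 := sq 4
lemma rb' (x : Pg) : b * (b * x) = x := by rw [← mul_assoc, rb, one_mul]
lemma rd' (x : Pg) : d * (d * x) = x := by rw [← mul_assoc, rd, one_mul]
lemma re' (x : Pg) : e * (e * x) = x := by rw [← mul_assoc, re, one_mul]

lemma braid13 : b * d * b = d * b * d := by
  have h := relP (mem11)
  simp only [_root_.map_mul, _root_.map_inv] at h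
  rw [mul_inv_eq_one] at h
  exact h

lemma braid34 : d * e * d = e * d * e := by
  have h := relP (mem16)
  simp only [_root_.map_mul, _root_.map_inv] at h
  rw [mul_inv_eq_one] at h
  exact h

lemma comm14 : b * e = e * b := by
  have h := relP (mem19)
  rw [_root_.map_commutatorElement] at h
  exact commutatorElement_eq_one_iff_mul_comm.mp h

lemma rdb : d * (b * d) = b * (d * b) := by
  simp only [← mul_assoc]; exact braid13.symm
lemma rdb' (x : Pg) : d * (b * (d * x)) = b * (d * (b * x)) := by
  simp only [← mul_assoc]; rw [braid13]
lemma red : e * (d * e) = d * (e * d) := by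
  simp only [← mul_assoc]; exact braid34.symm
lemma red' (x : Pg) : e * (d * (e * x)) = d * (e * (d * x)) := by
  simp only [← mul_assoc]; rw [braid34]
lemma reb : e * b = b * e := comm14.symm
lemma reb' (x : Pg) : e * (b * x) = b * (e * x) := by
  simp only [← mul_assoc]; rw [comm14]
lemma redbe : e * (d * (b * e)) = d * (e * (d * b)) := by
  rw [comm14, red']
lemma redbe' (x : Pg) : e * (d * (b * (e * x))) = d * (e * (d * (b * x))) := by
  rw [← reb', red']

-- expressing the other generators
lemma braid01 : a * b * a = b * a * b := by
  have h := relP (mem6)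
  simp only [_root_.map_mul, _root_.map_inv] at h
  rw [mul_inv_eq_one] at h
  exact h

lemma braid23 : c * d * c = d * c * d := by
  have h := relP (mem13)
  simp only [_root_.map_mul, _root_.map_inv] at h
  rw [mul_inv_eq_one] at h
  exact h

lemma dr : d = a * b * a := by
  have h := relP (mem21)
  simp only [_root_.map_mul, _root_.map_inv] at h
  rw [mul_inv_eq_one] at h
  exact h

lemma er : e = c * d * c := by
  have h := relP (mem22)
  simp only [_root_.map_mul, _root_.map_inv] at h
  rw [mul_inv_eq_one] at h
  exact h

lemma fr : f = b * c * b := by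
  have h := relP (mem23)
  simp only [_root_.map_mul, _root_.map_inv] at h
  rw [mul_inv_eq_one] at h
  exact h

lemma ea : a = b * (d * b) := by
  have h : d = b * a * b := dr.trans braid01
  rw [h]
  simp only [← mul_assoc]
  rw [rb, one_mul, mul_assoc, rb, mul_one]

lemma ec : c = d * (e * d) := by
  have h : e = d * c * d := er.trans braid23
  rw [h]
  simp only [← mul_assoc]
  rw [rd, one_mul, mul_assoc, rd, mul_one]

lemma ef : f = b * (d * (e * (d * b))) := by
  rw [fr, ec]
  simp only [mul_assoc]

private def S : Set Pg :=
  {(1 : Pg),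
   b,
   d,
   e,
   b * d,
   b * e,
   d * b,
   d * e,
   e * d,
   b * (d * b),
   b * (d * e),
   b * (e * d),
   d * (b * e),
   d * (e * d),
   e * (d * b),
   b * (d * (b * e)),
   b * (d * (e * d)),
   b * (e * (d * b)),
   d * (b * (e * d)),
   d * (e * (d * b)),
   b * (d * (b * (e * d))),
   b * (d * (e * (d * b))),
   d * (b * (e * (d * b))),
   b * (d * (b * (e * (d * b))))}

set_option maxHeartbeats 2000000 in
lemma closure1 : ∀ y ∈ S, b * y ∈ S := by
  intro y hy
  simp only [S, Set.mem_insert_iff, Set.mem_singleton_iff] at hy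
  rcases hy with rfl|rfl|rfl|rfl|rfl|rfl|rfl|rfl|rfl|rfl|rfl|rfl|rfl|rfl|rfl|rfl|rfl|rfl|rfl|rfl|rfl|rfl|rfl|rfl <;>
  · try simp only [rb', rd', re', rdb', red', reb', redbe', rb, rd, re, rdb, red, reb, redbe,
      mul_one, one_mul]
    simp only [S, Set.mem_insert_iff, Set.mem_singleton_iff]
    tauto

set_option maxHeartbeats 2000000 in
lemma closure3 : ∀ y ∈ S, d * y ∈ S := by
  intro y hy
  simp only [S, Set.mem_insert_iff, Set.mem_singleton_iff] at hy
  rcases hy with rfl|rfl|rfl|rfl|rfl|rfl|rfl|rfl|rfl|rfl|rfl|rfl|rfl|rfl|rfl|rfl|rfl|rfl|rfl|rfl|rfl|rfl|rfl|rfl <;>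
  · try simp only [rb', rd', re', rdb', red', reb', redbe', rb, rd, re, rdb, red, reb, redbe,
      mul_one, one_mul]
    simp only [S, Set.mem_insert_iff, Set.mem_singleton_iff]
    tauto

set_option maxHeartbeats 2000000 in
lemma closure4 : ∀ y ∈ S, e * y ∈ S := by
  intro y hy
  simp only [S, Set.mem_insert_iff, Set.mem_singleton_iff] at hy
  rcases hy with rfl|rfl|rfl|rfl|rfl|rfl|rfl|rfl|rfl|rfl|rfl|rfl|rfl|rfl|rfl|rfl|rfl|rfl|rfl|rfl|rfl|rfl|rfl|rfl <;>
  · try simp only [rb', rd', re', rdb', red', reb', redbe', rb, rd, re, rdb, red, reb, redbe,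
      mul_one, one_mul]
    simp only [S, Set.mem_insert_iff, Set.mem_singleton_iff]
    tauto

lemma closure0 : ∀ y ∈ S, a * y ∈ S := by
  intro y hy
  rw [ea, mul_assoc, mul_assoc]
  exact closure1 _ (closure3 _ (closure1 _ hy))

lemma closure2 : ∀ y ∈ S, c * y ∈ S := by
  intro y hy
  rw [ec, mul_assoc, mul_assoc]
  exact closure3 _ (closure4 _ (closure3 _ hy))

lemma closure5 : ∀ y ∈ S, f * y ∈ S := by
  intro y hy
  rw [ef, mul_assoc, mul_assoc, mul_assoc, mul_assoc]
  exact closure1 _ (closure3 _ (closure4 _ (closure3 _ (closure1 _ hy))))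

lemma mem_S (x : Pg) : x ∈ S := by
  have key : ∀ z : FreeGroup (Fin 6), ∀ y ∈ S, PresentedGroup.mk tetraRels z * y ∈ S := by
    intro z
    induction z using FreeGroup.induction_on with
    | C1 => intro y hy; simpa using hy
    | of i =>
      fin_cases i
      · exact closure0
      · exact closure1
      · exact closure2
      · exact closure3
      · exact closure4
      · exact closure5
    | inv_of i ih =>
      intro y hy
      have h2 : ((PresentedGroup.mk tetraRels) (FreeGroup.of i))⁻¹ = (PresentedGroup.mk tetraRels) (FreeGroup.of i) :=
        inv_eq_of_mul_eq_one_right (sq i)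
      rw [_root_.map_inv, h2]
      exact ih y hy
    | mul u v ihu ihv =>
      intro y hy
      rw [_root_.map_mul, mul_assoc]
      exact ihu _ (ihv _ hy)
  induction x using PresentedGroup.induction_on with
  | _ z => simpa using key z 1 (Set.mem_insert _ _)

lemma φb : φhom b = Equiv.swap 0 1 := PresentedGroup.toGroup.of Fv_rels
lemma φd : φhom d = Equiv.swap 1 2 := PresentedGroup.toGroup.of Fv_rels
lemma φe : φhom e = Equiv.swap 2 3 := PresentedGroup.toGroup.of Fv_rels

lemma ker_triv : ∀ x : Pg, φhom x = 1 → x = 1 := by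
  intro x hx
  have hs := mem_S x
  simp only [S, Set.mem_insert_iff, Set.mem_singleton_iff] at hs
  rcases hs with rfl|rfl|rfl|rfl|rfl|rfl|rfl|rfl|rfl|rfl|rfl|rfl|rfl|rfl|rfl|rfl|rfl|rfl|rfl|rfl|rfl|rfl|rfl|rfl
  · rfl
  all_goals
    exfalso
    simp only [_root_.map_mul, φb, φd, φe] at hx
    revert hx
    decide

lemma hinj : Function.Injective φhom :=
  (injective_iff_map_eq_one φhom).mpr ker_triv

lemma hsurj : Function.Surjective φhom := by
  intro σ
  have hσ : σ ∈ φhom.range := by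
    refine Equiv.Perm.swap_induction_on σ (one_mem _) ?_
    intro f x y hxy hf
    have hsw : ∀ x y : Fin 4, x ≠ y → ∃ i : Fin 6, Fv i = Equiv.swap x y := by decide
    obtain ⟨i, hi⟩ := hsw x y hxy
    exact mul_mem ⟨PresentedGroup.of i, by rw [show φhom (PresentedGroup.of i) = Fv i from
      PresentedGroup.toGroup.of Fv_rels, hi]⟩ hf
  exact hσ

end TetraAux

/-- The presented group `G̃` of the tetrahedron is isomorphic to `S4` via
`a1 ↦ (1 3)`, `a2 ↦ (1 2)`, `a3 ↦ (2 4)`, `a4 ↦ (2 3)`, `a5 ↦ (3 4)`, `a6 ↦ (1 4)`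
(0-based transpositions below). -/
theorem stmt_4 :
    ∃ φ : PresentedGroup tetraRels ≃* Equiv.Perm (Fin 4),
      φ (PresentedGroup.of 0) = Equiv.swap 0 2 ∧
      φ (PresentedGroup.of 1) = Equiv.swap 0 1 ∧
      φ (PresentedGroup.of 2) = Equiv.swap 1 3 ∧
      φ (PresentedGroup.of 3) = Equiv.swap 1 2 ∧
      φ (PresentedGroup.of 4) = Equiv.swap 2 3 ∧
      φ (PresentedGroup.of 5) = Equiv.swap 0 3 := by
  refine ⟨MulEquiv.ofBijective TetraAux.φhom ⟨TetraAux.hinj, TetraAux.hsurj⟩,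
    ?_, ?_, ?_, ?_, ?_, ?_⟩ <;>
  · show TetraAux.φhom (PresentedGroup.of _) = _
    rw [show ∀ i : Fin 6, TetraAux.φhom (PresentedGroup.of i) = TetraAux.Fv i from
      fun i => PresentedGroup.toGroup.of TetraAux.Fv_rels]
    rfl
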